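/- Let q > 1 be a real number. Then for every integer k ≥ 1, ∑_{j=1}^{k} (-1)^{j-1} · ∏_{m=1}^{j} ((-q)^{-m+1} - (-q)^{-k}) / (1 - (-q)^{-m}) = 1. -/

import Mathlib

/- The q-series identity from the proof of Lemma 4.5. -/

theorem stmt9 (q : ℝ) (hq : 1 < q) (k : ℕ) (hk : 1 ≤ k) :
    ∑ j ∈ Finset.Icc 1 k, (-1 : ℝ) ^ (j - 1) *
      ∏ m ∈ Finset.Icc 1 j,
        (((-q) ^ (-(m : ℤ) + 1) - (-q) ^ (-(k : ℤ))) / (1 - (-q) ^ (-(m : ℤ)))) = 1 := by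
  set x : ℝ := -q with hxdef
  have hx0 : x ≠ 0 := by
    simp [hxdef]; linarith
  set X : ℝ := x ^ (-(k : ℤ)) with hX
  set f : ℕ → ℝ := fun m => x ^ (-(m : ℤ) + 1) - X with hf
  set g : ℕ → ℝ := fun m => x ^ (-(m : ℤ)) - X with hg
  set d : ℕ → ℝ := fun m => 1 - x ^ (-(m : ℤ)) with hd
  have hdne : ∀ m : ℕ, 1 ≤ m → d m ≠ 0 := by
    intro m hm
    have habs : |x ^ (-(m : ℤ))| < 1 := by
      rw [zpow_neg, abs_inv]
      have h2 : |x ^ ((m : ℤ))| = q ^ m := by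
        rw [zpow_natCast, abs_pow, hxdef, abs_neg, abs_of_pos (by linarith)]
      rw [h2]
      have h1 : (1:ℝ) < q ^ m := one_lt_pow₀ hq (by omega)
      rw [inv_lt_one_iff₀]; right; exact h1
    intro h
    have h1 : x ^ (-(m : ℤ)) = 1 := by
      simp only [hd] at h; linarith
    rw [h1] at habs; norm_num at habs
  have key : ∀ j : ℕ, ∏ m ∈ Finset.Icc 1 (j+1), f m
      = (1 - X) * ∏ m ∈ Finset.Icc 1 j, g m := by
    intro j
    induction j with
    | zero =>
      simp [hf]
    | succ n ih =>
      rw [Finset.prod_Icc_succ_top (by omega : 1 ≤ n + 1 + 1), ih,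
        Finset.prod_Icc_succ_top (by omega : 1 ≤ n + 1)]
      have : f (n + 2) = g (n + 1) := by
        simp only [hf, hg]
        push_cast
        ring_nf
      rw [this]; ring
  have main : ∀ j : ℕ, 1 ≤ j →
      ∑ i ∈ Finset.Icc 1 j, (-1 : ℝ) ^ (i - 1) * ∏ m ∈ Finset.Icc 1 i, (f m / d m)
        = 1 + (-1 : ℝ) ^ (j + 1) * ∏ m ∈ Finset.Icc 1 j, (g m / d m) := by
    intro j hj
    induction j with
    | zero => omega
    | succ n ih =>
      rcases Nat.eq_or_lt_of_le hj with h1 | h1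
      · -- n + 1 = 1
        have hn : n = 0 := by omega
        subst hn
        simp only [Finset.Icc_self, Finset.sum_singleton, Finset.prod_singleton]
        have hd1 := hdne 1 le_rfl
        have hf1 : f 1 = 1 - X := by simp [hf]
        have hg1 : g 1 = x ^ (-(1:ℤ)) - X := by simp [hg]
        have hd1' : d 1 = 1 - x ^ (-(1:ℤ)) := by simp [hd]
        rw [hf1, hg1, hd1'] 
        rw [hd1'] at hd1
        have hne : (-1:ℝ) - q ≠ 0 := by linarith
        field_simp [hne]
        linear_combination mul_inv_cancel₀ hne
      · have hn : 1 ≤ n := by omega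
        rw [Finset.sum_Icc_succ_top (by omega : 1 ≤ n + 1), ih hn]
        set B : ℝ := ∏ m ∈ Finset.Icc 1 n, g m with hB
        set D : ℝ := ∏ m ∈ Finset.Icc 1 n, d m with hD
        have hDne : D ≠ 0 := Finset.prod_ne_zero_iff.mpr (fun m hm =>
          hdne m (Finset.mem_Icc.mp hm).1)
        have hdn1 : d (n + 1) ≠ 0 := hdne (n + 1) (by omega)
        have e1 : ∏ m ∈ Finset.Icc 1 (n+1), (f m / d m)
            = ((1 - X) * B) / (D * d (n+1)) := by
          rw [Finset.prod_div_distrib, key n,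
            Finset.prod_Icc_succ_top (by omega : 1 ≤ n + 1)]
        have e2 : ∏ m ∈ Finset.Icc 1 (n+1), (g m / d m)
            = (B * g (n+1)) / (D * d (n+1)) := by
          rw [Finset.prod_div_distrib,
            Finset.prod_Icc_succ_top (by omega : 1 ≤ n + 1),
            Finset.prod_Icc_succ_top (by omega : 1 ≤ n + 1)]
        have e3 : ∏ m ∈ Finset.Icc 1 n, (g m / d m) = B / D :=
          Finset.prod_div_distrib _ _
        rw [e1, e2, e3]
        have hrel : g (n + 1) = (1 - X) - d (n + 1) := by
          simp only [hg, hd]; ring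
        simp only [Nat.add_sub_cancel]
        rw [hrel]
        field_simp
        ring
  have hmain := main k hk
  rw [hmain]
  have hzero : ∏ m ∈ Finset.Icc 1 k, (g m / d m) = 0 := by
    apply Finset.prod_eq_zero (Finset.mem_Icc.mpr ⟨hk, le_rfl⟩)
    simp [hg, hX]
  rw [hzero]; ring
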